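/- Let n be a positive integer, s ∈ (0,1), and p, q > 1 real numbers satisfying 1 - 2s/n < 1/p + 1/q < 1, and additionally, if n > 4s, also 1/p > (n-4s)/(2n) and 1/q > (n-4s)/(2n). Then there exists θ ∈ (0,2) such that p < 2n/(n - 2sθ) and q < 2n/(n - 2s(2-θ)), where these right-hand sides are interpreted as +∞ when the denominators are ≤ 0. -/

import Mathlib

open Real

set_option maxHeartbeats 1000000 in
theorem stmt_0 (n : ℕ) (hn : 0 < n) (s p q : ℝ)
    (hs : s ∈ Set.Ioo (0:ℝ) 1) (hp : 1 < p) (hq : 1 < q)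
    (hpq : 1 - 2*s/(n:ℝ) < 1/p + 1/q ∧ 1/p + 1/q < 1)
    (hpq1 : (n:ℝ) > 4*s → 1/p > ((n:ℝ) - 4*s)/(2*(n:ℝ)) ∧ 1/q > ((n:ℝ) - 4*s)/(2*(n:ℝ))) :
    ∃ θ ∈ Set.Ioo (0:ℝ) 2,
      ((n:ℝ) - 2*s*θ ≤ 0 ∨ p < 2*(n:ℝ)/((n:ℝ) - 2*s*θ)) ∧
      ((n:ℝ) - 2*s*(2-θ) ≤ 0 ∨ q < 2*(n:ℝ)/((n:ℝ) - 2*s*(2-θ))) := by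
  obtain ⟨hs0, hs1⟩ := hs
  have hn0 : (0:ℝ) < n := by exact_mod_cast hn
  have hp0 : (0:ℝ) < p := lt_trans one_pos hp
  have hq0 : (0:ℝ) < q := lt_trans one_pos hq
  obtain ⟨a, ha_def⟩ : ∃ a:ℝ, a = (n:ℝ) * (1 - 2/p) / (2*s) := ⟨_, rfl⟩
  obtain ⟨b, hb_def⟩ : ∃ b:ℝ, b = (n:ℝ) * (1 - 2/q) / (2*s) := ⟨_, rfl⟩
  -- a < 2
  have ha2 : a < 2 := by
    rw [ha_def, div_lt_iff₀ (by positivity)]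
    rcases le_or_gt (n:ℝ) (4*s) with h | h
    · have h2p : 0 < 2/p := by positivity
      nlinarith
    · have := (hpq1 h).1
      rw [gt_iff_lt, div_lt_div_iff₀ (by positivity) hp0] at this
      have hid : (n:ℝ)*(1-2/p)*p = n*p - 2*n := by field_simp
      nlinarith [hid]
  have hb2 : b < 2 := by
    rw [hb_def, div_lt_iff₀ (by positivity)]
    rcases le_or_gt (n:ℝ) (4*s) with h | h
    · have h2q : 0 < 2/q := by positivity
      nlinarith
    · have := (hpq1 h).2
      rw [gt_iff_lt, div_lt_div_iff₀ (by positivity) hq0] at this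
      have hid : (n:ℝ)*(1-2/q)*q = n*q - 2*n := by field_simp
      nlinarith [hid]
  -- a + b < 2
  have hab : a + b < 2 := by
    have h1 := hpq.1
    have h2 : 1 - (1/p + 1/q) < 2*s/(n:ℝ) := by linarith
    rw [lt_div_iff₀ hn0] at h2
    rw [ha_def, hb_def, ← add_div, div_lt_iff₀ (by positivity)]
    have hid : (n:ℝ)*(1-2/p) + (n:ℝ)*(1-2/q) = 2*((1 - (1/p + 1/q))*(n:ℝ)) := by ring
    linarith
  have hLU : max 0 a < min 2 (2-b) := by
    rcases max_cases (0:ℝ) a with ⟨h1, h2⟩ | ⟨h1, h2⟩ <;>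
      rcases min_cases (2:ℝ) (2-b) with ⟨h3, h4⟩ | ⟨h3, h4⟩ <;> rw [h1, h3] <;> linarith
  obtain ⟨θ, hθL, hθU⟩ := exists_between hLU
  have hθa : a < θ := lt_of_le_of_lt (le_max_right 0 a) hθL
  have hθb : b < 2 - θ := by
    have := lt_of_lt_of_le hθU (min_le_right 2 (2-b)); linarith
  have hθ0 : 0 < θ := lt_of_le_of_lt (le_max_left 0 a) hθL
  have hθ2 : θ < 2 := lt_of_lt_of_le hθU (min_le_left 2 (2-b))
  refine ⟨θ, ⟨hθ0, hθ2⟩, ?_, ?_⟩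
  · have hkey : (n:ℝ) - 2*s*θ < 2*(n:ℝ)/p := by
      have : (n:ℝ) * (1 - 2/p) < 2*s*θ := by
        rw [ha_def, div_lt_iff₀ (by positivity)] at hθa
        nlinarith
      rw [lt_div_iff₀ hp0]
      have h2p : (n:ℝ) * (1 - 2/p) * p = n * p - 2*n := by field_simp
      nlinarith
    rcases le_or_gt ((n:ℝ) - 2*s*θ) 0 with h | h
    · exact Or.inl h
    · right
      rw [lt_div_iff₀ h]
      rw [lt_div_iff₀ hp0] at hkey
      nlinarith
  · have hkey : (n:ℝ) - 2*s*(2 - θ) < 2*(n:ℝ)/q := by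
      have : (n:ℝ) * (1 - 2/q) < 2*s*(2 - θ) := by
        rw [hb_def, div_lt_iff₀ (by positivity)] at hθb
        nlinarith
      rw [lt_div_iff₀ hq0]
      have h2q : (n:ℝ) * (1 - 2/q) * q = n * q - 2*n := by field_simp
      nlinarith
    rcases le_or_gt ((n:ℝ) - 2*s*(2 - θ)) 0 with h | h
    · exact Or.inl h
    · right
      rw [lt_div_iff₀ h]
      rw [lt_div_iff₀ hq0] at hkey
      nlinarith
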